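/- For the complete bipartite graph K_{m,n}: if m = n = 2 or m = n ≥ 4 then the equitable nsd-index of K_{m,n} equals 2; the equitable nsd-index of K_{3,3} equals 3; and if 1 ≤ m < n then the equitable nsd-index of K_{m,n} equals 1. -/

import Mathlib

open Finset

variable {V : Type*} [Fintype V] [DecidableEq V]

/-- The vertex sum at `v` induced by an edge colouring `γ`:
the sum of the colours of the edges incident with `v`. -/
def vSum (G : SimpleGraph V) [DecidableRel G.Adj] (γ : Sym2 V → ℕ) (v : V) : ℕ :=
  ∑ u ∈ G.neighborFinset v, γ s(v, u)

/-- `γ` is an edge `k`-colouring: every edge gets a colour in `{1, …, k}`. -/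
def IsEdgeKColoring (G : SimpleGraph V) (k : ℕ) (γ : Sym2 V → ℕ) : Prop :=
  ∀ e ∈ G.edgeSet, 1 ≤ γ e ∧ γ e ≤ k

/-- `γ` is a neighbour-sum-distinguishing edge colouring. -/
def NsdEdge (G : SimpleGraph V) [DecidableRel G.Adj] (γ : Sym2 V → ℕ) : Prop :=
  ∀ ⦃u v : V⦄, G.Adj u v → vSum G γ u ≠ vSum G γ v

/-- The number of edges of `G` coloured `i` by `γ`. -/
def edgeClassCard (G : SimpleGraph V) [DecidableRel G.Adj] (γ : Sym2 V → ℕ) (i : ℕ) : ℕ :=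
  (G.edgeFinset.filter fun e => γ e = i).card

/-- `γ` is equitable as an edge `k`-colouring: any two colour classes among
`{1, …, k}` have sizes differing by at most one. -/
def EquitableEdge (G : SimpleGraph V) [DecidableRel G.Adj] (k : ℕ) (γ : Sym2 V → ℕ) : Prop :=
  ∀ i ∈ Finset.Icc 1 k, ∀ j ∈ Finset.Icc 1 k,
    edgeClassCard G γ i ≤ edgeClassCard G γ j + 1

/-- `G` admits an equitable neighbour-sum-distinguishing edge `k`-colouring. -/
def HasEqNsdEdge (G : SimpleGraph V) [DecidableRel G.Adj] (k : ℕ) : Prop :=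
  ∃ γ : Sym2 V → ℕ, IsEdgeKColoring G k γ ∧ NsdEdge G γ ∧ EquitableEdge G k γ

instance {W X : Type*} : DecidableRel (completeBipartiteGraph W X).Adj := fun a b =>
  inferInstanceAs (Decidable ((a.isLeft ∧ b.isRight) ∨ (a.isRight ∧ b.isLeft)))

/- ===================== auxiliary lemmas ===================== -/

section Aux

variable {m n : ℕ}

lemma nbhd_inl (i : Fin m) :
    (completeBipartiteGraph (Fin m) (Fin n)).neighborFinset (Sum.inl i)
      = univ.map ⟨Sum.inr, Sum.inr_injective⟩ := by
  ext v
  cases v <;> simp [SimpleGraph.mem_neighborFinset]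

lemma nbhd_inr (j : Fin n) :
    (completeBipartiteGraph (Fin m) (Fin n)).neighborFinset (Sum.inr j)
      = univ.map ⟨Sum.inl, Sum.inl_injective⟩ := by
  ext v
  cases v <;> simp [SimpleGraph.mem_neighborFinset]

lemma vSum_inl (γ : Sym2 (Fin m ⊕ Fin n) → ℕ) (i : Fin m) :
    vSum (completeBipartiteGraph (Fin m) (Fin n)) γ (Sum.inl i)
      = ∑ j : Fin n, γ s(Sum.inl i, Sum.inr j) := by
  rw [vSum, nbhd_inl, Finset.sum_map]
  rfl

lemma vSum_inr (γ : Sym2 (Fin m ⊕ Fin n) → ℕ) (j : Fin n) :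
    vSum (completeBipartiteGraph (Fin m) (Fin n)) γ (Sum.inr j)
      = ∑ i : Fin m, γ s(Sum.inl i, Sum.inr j) := by
  rw [vSum, nbhd_inr, Finset.sum_map]
  simp [Sym2.eq_swap]

lemma classCard_eq (γ : Sym2 (Fin m ⊕ Fin n) → ℕ) (c : ℕ) :
    edgeClassCard (completeBipartiteGraph (Fin m) (Fin n)) γ c
      = (univ.filter fun p : Fin m × Fin n => γ s(Sum.inl p.1, Sum.inr p.2) = c).card := by
  rw [edgeClassCard]
  have himg : ((completeBipartiteGraph (Fin m) (Fin n)).edgeFinset.filter fun e => γ e = c)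
      = (univ.filter fun p : Fin m × Fin n => γ s(Sum.inl p.1, Sum.inr p.2) = c).image
          (fun p => s(Sum.inl p.1, Sum.inr p.2)) := by
    ext e
    refine Sym2.ind (fun u v => ?_) e
    simp only [Finset.mem_filter, SimpleGraph.mem_edgeFinset, SimpleGraph.mem_edgeSet,
      Finset.mem_image, Finset.mem_univ, true_and]
    constructor
    · rintro ⟨hadj, hc⟩
      rcases u with i | j <;> rcases v with i' | j' <;> simp at hadj
      · exact ⟨(i, j'), hc, rfl⟩
      · exact ⟨(i', j), by rwa [Sym2.eq_swap] at hc, Sym2.eq_swap⟩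
    · rintro ⟨⟨i, j⟩, hc, he⟩
      obtain ⟨h1, h2⟩ | ⟨h1, h2⟩ := Sym2.eq_iff.mp he <;> subst h1 <;> subst h2
      · exact ⟨by simp, hc⟩
      · exact ⟨by simp, by rwa [Sym2.eq_swap] at hc⟩
  rw [himg, Finset.card_image_of_injOn]
  intro p _ q _ hpq
  rcases Sym2.eq_iff.mp hpq with ⟨h1, h2⟩ | ⟨h1, h2⟩
  · exact Prod.ext (Sum.inl_injective h1) (Sum.inr_injective h2)
  · exact absurd h1 (by simp)

/-- The colouring of `K_{m,n}` associated with a matrix. -/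
def bipColoring (M : Fin m → Fin n → ℕ) : Sym2 (Fin m ⊕ Fin n) → ℕ :=
  Sym2.lift ⟨fun u v => match u, v with
    | .inl i, .inr j => M i j
    | .inr j, .inl i => M i j
    | _, _ => 0,
    by intro u v; rcases u with i | j <;> rcases v with i' | j' <;> rfl⟩

lemma bipColoring_apply (M : Fin m → Fin n → ℕ) (i : Fin m) (j : Fin n) :
    bipColoring M s(Sum.inl i, Sum.inr j) = M i j := rfl

lemma hasEqNsd_of_matrix (k : ℕ) (M : Fin m → Fin n → ℕ)
    (hbd : ∀ i j, 1 ≤ M i j ∧ M i j ≤ k)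
    (hnsd : ∀ i j, (∑ j', M i j') ≠ (∑ i', M i' j))
    (heq : ∀ a ∈ Finset.Icc 1 k, ∀ b ∈ Finset.Icc 1 k,
      (univ.filter fun p : Fin m × Fin n => M p.1 p.2 = a).card
        ≤ (univ.filter fun p : Fin m × Fin n => M p.1 p.2 = b).card + 1) :
    HasEqNsdEdge (completeBipartiteGraph (Fin m) (Fin n)) k := by
  refine ⟨bipColoring M, ?_, ?_, ?_⟩
  · intro e he
    induction e using Sym2.ind with
    | _ u v =>
      rw [SimpleGraph.mem_edgeSet] at he
      rcases u with i | j <;> rcases v with i' | j' <;> simp at he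
      · exact hbd i j'
      · rw [Sym2.eq_swap]; exact hbd i' j
  · intro u v hadj
    rcases u with i | j <;> rcases v with i' | j' <;> simp at hadj
    · rw [vSum_inl, vSum_inr]
      simpa only [bipColoring_apply] using hnsd i j'
    · rw [vSum_inr, vSum_inl]
      simpa only [bipColoring_apply] using (hnsd i' j).symm
  · intro a ha b hb
    rw [classCard_eq, classCard_eq]
    exact heq a ha b hb

/- counting helpers -/

lemma card_filter_fin (n : ℕ) (p : ℕ → Prop) [DecidablePred p] :
    (univ.filter fun i : Fin n => p i.val).card = ((range n).filter p).card := by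
  rw [Finset.card_filter, Finset.card_filter,
    ← Fin.sum_univ_eq_sum_range (fun x => if p x then 1 else 0) n]

lemma sum_ite_21 {α : Type*} (s : Finset α) (p : α → Prop) [DecidablePred p] :
    ∑ x ∈ s, (if p x then 2 else 1) = s.card + (s.filter p).card := by
  have h : ∀ x, (if p x then 2 else 1) = 1 + (if p x then 1 else 0) := by
    intro x; split <;> rfl
  simp_rw [h]
  rw [Finset.sum_add_distrib, Finset.sum_const, smul_eq_mul, mul_one, Finset.card_filter]

lemma sum_ite_c0 {α : Type*} (s : Finset α) (p : α → Prop) [DecidablePred p] (c : ℕ) :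
    ∑ x ∈ s, (if p x then c else 0) = c * (s.filter p).card := by
  rw [Finset.sum_ite, Finset.sum_const, Finset.sum_const_zero, add_zero, smul_eq_mul, mul_comm]

lemma rc_lt (n m : ℕ) (h : m ≤ n) : ((range n).filter fun x => x < m).card = m := by
  have : (range n).filter (fun x => x < m) = range m := by
    ext x; simp only [mem_filter, mem_range]; omega
  rw [this, Finset.card_range]

lemma rc_ge (n m : ℕ) : ((range n).filter fun x => m ≤ x).card = n - m := by
  have : (range n).filter (fun x => m ≤ x) = Finset.Ico m n := by
    ext x; simp only [mem_filter, mem_range, Finset.mem_Ico]; omega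
  rw [this, Nat.card_Ico]

lemma prodCount {a b : ℕ} (P : Fin a → Fin b → Prop) [∀ i j, Decidable (P i j)] :
    (univ.filter fun p : Fin a × Fin b => P p.1 p.2).card
      = ∑ i : Fin a, (univ.filter fun j : Fin b => P i j).card := by
  rw [Finset.card_filter, Fintype.sum_prod_type]
  exact Finset.sum_congr rfl fun i _ => (Finset.card_filter _ _).symm

end Aux

lemma rc_not_lt (n m : ℕ) : ((range n).filter fun x => ¬ x < m).card = n - m := by
  have : (range n).filter (fun x => ¬ x < m) = Finset.Ico m n := by
    ext x; simp only [mem_filter, mem_range, Finset.mem_Ico]; omega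
  rw [this, Nat.card_Ico]

lemma sum_ite_val (n : ℕ) (p : ℕ → Prop) [DecidablePred p] (c : ℕ) :
    (∑ i : Fin n, if p i.val then c else 0) = c * ((range n).filter p).card := by
  rw [sum_ite_c0 univ (fun i : Fin n => p i.val) c, card_filter_fin]

section Even

lemma mem_even (n m : ℕ) (h : n = 2 * m) (hm : 1 ≤ m) :
    HasEqNsdEdge (completeBipartiteGraph (Fin n) (Fin n)) 2 := by
  subst h
  apply hasEqNsd_of_matrix 2 (fun i j => if i.val < m then 2 else 1)
  · intro i j; split <;> omega
  · intro i j
    have hcol : (∑ i' : Fin (2 * m), if i'.val < m then 2 else 1) = 2 * m + m := by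
      rw [sum_ite_21 univ (fun i' : Fin (2 * m) => i'.val < m), Finset.card_univ,
        Fintype.card_fin, card_filter_fin (2 * m) (fun x => x < m), rc_lt _ _ (by omega)]
    rw [hcol]
    by_cases hi : i.val < m <;>
      simp only [hi, if_true, if_false, Finset.sum_const, Finset.card_univ,
        Fintype.card_fin, smul_eq_mul] <;> omega
  · intro a ha b hb
    have key : ∀ c, c ∈ Finset.Icc 1 2 →
        (univ.filter fun p : Fin (2 * m) × Fin (2 * m) =>
          (if p.1.val < m then 2 else 1) = c).card = 2 * m * m := by
      intro c hc
      rw [prodCount (fun i _ => (if i.val < m then 2 else 1) = c)]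
      rw [Finset.mem_Icc] at hc
      obtain ⟨hc1, hc2⟩ := hc
      interval_cases c
      · have h1 : ∀ i : Fin (2 * m),
            (univ.filter fun _ : Fin (2 * m) => (if i.val < m then 2 else 1) = 1).card
              = if ¬ i.val < m then 2 * m else 0 := by
          intro i
          by_cases hi : i.val < m <;>
            simp [hi, Finset.filter_true_of_mem, Finset.card_univ]
        rw [Finset.sum_congr rfl fun i _ => h1 i,
          sum_ite_val (2 * m) (fun x => ¬ x < m) (2 * m), rc_not_lt]
        congr 1
        omega
      · have h2 : ∀ i : Fin (2 * m),
            (univ.filter fun _ : Fin (2 * m) => (if i.val < m then 2 else 1) = 2).card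
              = if i.val < m then 2 * m else 0 := by
          intro i
          by_cases hi : i.val < m <;>
            simp [hi, Finset.filter_true_of_mem, Finset.card_univ]
        rw [Finset.sum_congr rfl fun i _ => h2 i,
          sum_ite_val (2 * m) (fun x => x < m) (2 * m), rc_lt _ _ (by omega)]
    rw [key a ha, key b hb]
    omega

end Even

section Odd

lemma mem_odd (n m : ℕ) (h : n = 2 * m + 1) (hm : 2 ≤ m) :
    HasEqNsdEdge (completeBipartiteGraph (Fin n) (Fin n)) 2 := by
  subst h
  have hrc : ∀ i : Fin (2 * m + 1),
      ((range (2 * m + 1)).filter fun y => i.val < m ∨ (y < m ∧ i.val = m + y)).card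
        = if i.val < m then 2 * m + 1 else if i.val < 2 * m then 1 else 0 := by
    intro i
    have hi3 := i.isLt
    by_cases h1 : i.val < m
    · have hs : ((range (2 * m + 1)).filter fun y => i.val < m ∨ (y < m ∧ i.val = m + y))
          = range (2 * m + 1) := by
        ext x; simp only [mem_filter, mem_range]; omega
      rw [hs, Finset.card_range]
      simp [h1]
    · by_cases h2 : i.val < 2 * m
      · have hs : ((range (2 * m + 1)).filter fun y => i.val < m ∨ (y < m ∧ i.val = m + y))
            = {i.val - m} := by
          ext x; simp only [mem_filter, mem_range, Finset.mem_singleton]; omega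
        rw [hs, Finset.card_singleton]
        simp [h1, h2]
      · have hs : ((range (2 * m + 1)).filter fun y => i.val < m ∨ (y < m ∧ i.val = m + y))
            = ∅ := by
          ext x; simp only [mem_filter, mem_range, Finset.notMem_empty, iff_false]; omega
        rw [hs, Finset.card_empty]
        simp [h1, h2]
  have hcc : ∀ j : Fin (2 * m + 1),
      ((range (2 * m + 1)).filter fun x => x < m ∨ (j.val < m ∧ x = m + j.val)).card
        = if j.val < m then m + 1 else m := by
    intro j
    by_cases h1 : j.val < m
    · have hs : ((range (2 * m + 1)).filter fun x => x < m ∨ (j.val < m ∧ x = m + j.val))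
          = insert (m + j.val) (range m) := by
        ext x; simp only [mem_filter, mem_range, Finset.mem_insert]; omega
      rw [hs, Finset.card_insert_of_notMem (by simp), Finset.card_range]
      simp [h1]
    · have hs : ((range (2 * m + 1)).filter fun x => x < m ∨ (j.val < m ∧ x = m + j.val))
          = range m := by
        ext x; simp only [mem_filter, mem_range]; omega
      rw [hs, Finset.card_range]
      simp [h1]
  apply hasEqNsd_of_matrix 2
    (fun i j => if i.val < m ∨ (j.val < m ∧ i.val = m + j.val) then 2 else 1)
  · intro i j; split <;> omega
  · intro i j
    rw [sum_ite_21 univ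
        (fun j' : Fin (2 * m + 1) => i.val < m ∨ (j'.val < m ∧ i.val = m + j'.val)),
      sum_ite_21 univ
        (fun i' : Fin (2 * m + 1) => i'.val < m ∨ (j.val < m ∧ i'.val = m + j.val)),
      Finset.card_univ, Fintype.card_fin,
      card_filter_fin (2 * m + 1) (fun y => i.val < m ∨ (y < m ∧ i.val = m + y)),
      card_filter_fin (2 * m + 1) (fun x => x < m ∨ (j.val < m ∧ x = m + j.val)),
      hrc i, hcc j]
    split_ifs <;> omega
  · intro a ha b hb
    have hin2 : ∀ i : Fin (2 * m + 1),
        (univ.filter fun j : Fin (2 * m + 1) =>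
          (if i.val < m ∨ (j.val < m ∧ i.val = m + j.val) then 2 else 1) = 2).card
          = (if i.val < m then 2 * m else 0) + (if i.val < 2 * m then 1 else 0) := by
      intro i
      have hcg : (univ.filter fun j : Fin (2 * m + 1) =>
          (if i.val < m ∨ (j.val < m ∧ i.val = m + j.val) then 2 else 1) = 2)
          = (univ.filter fun j : Fin (2 * m + 1) =>
             i.val < m ∨ (j.val < m ∧ i.val = m + j.val)) := by
        apply Finset.filter_congr
        intro j _
        by_cases hc : i.val < m ∨ (j.val < m ∧ i.val = m + j.val) <;> simp [hc]
      rw [hcg, card_filter_fin (2 * m + 1) (fun y => i.val < m ∨ (y < m ∧ i.val = m + y)),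
        hrc i]
      have hi3 := i.isLt
      split_ifs <;> omega
    have hin1 : ∀ i : Fin (2 * m + 1),
        (univ.filter fun j : Fin (2 * m + 1) =>
          (if i.val < m ∨ (j.val < m ∧ i.val = m + j.val) then 2 else 1) = 1).card
          = (if m ≤ i.val then 2 * m else 0) + (if 2 * m ≤ i.val then 1 else 0) := by
      intro i
      have hi3 := i.isLt
      have hcg : (univ.filter fun j : Fin (2 * m + 1) =>
          (if i.val < m ∨ (j.val < m ∧ i.val = m + j.val) then 2 else 1) = 1)
          = (univ.filter fun j : Fin (2 * m + 1) =>
             ¬ (i.val < m ∨ (j.val < m ∧ i.val = m + j.val))) := by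
        apply Finset.filter_congr
        intro j _
        by_cases hc : i.val < m ∨ (j.val < m ∧ i.val = m + j.val) <;> simp [hc]
      rw [hcg, card_filter_fin (2 * m + 1)
          (fun y => ¬ (i.val < m ∨ (y < m ∧ i.val = m + y)))]
      by_cases h1 : i.val < m
      · have hs : ((range (2 * m + 1)).filter
            fun y => ¬ (i.val < m ∨ (y < m ∧ i.val = m + y))) = ∅ := by
          ext x; simp only [mem_filter, mem_range, Finset.notMem_empty, iff_false]; omega
        rw [hs, Finset.card_empty]
        simp only [show ¬ m ≤ i.val by omega, show ¬ 2 * m ≤ i.val by omega, if_false]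
      · by_cases h2 : i.val < 2 * m
        · have hs : ((range (2 * m + 1)).filter
              fun y => ¬ (i.val < m ∨ (y < m ∧ i.val = m + y)))
              = (range (2 * m + 1)).erase (i.val - m) := by
            ext x
            simp only [mem_filter, mem_range, Finset.mem_erase]
            omega
          rw [hs, Finset.card_erase_of_mem (by simp only [mem_range]; omega),
            Finset.card_range]
          simp only [show m ≤ i.val by omega, show ¬ 2 * m ≤ i.val by omega, if_true,
            if_false]
          omega
        · have hs : ((range (2 * m + 1)).filter
              fun y => ¬ (i.val < m ∨ (y < m ∧ i.val = m + y))) = range (2 * m + 1) := by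
            ext x; simp only [mem_filter, mem_range]; omega
          rw [hs, Finset.card_range]
          simp only [show m ≤ i.val by omega, show 2 * m ≤ i.val by omega, if_true]
    have hC2 : (univ.filter fun p : Fin (2 * m + 1) × Fin (2 * m + 1) =>
        (if p.1.val < m ∨ (p.2.val < m ∧ p.1.val = m + p.2.val) then 2 else 1) = 2).card
        = 2 * m * m + 2 * m := by
      refine (prodCount (fun i j : Fin (2 * m + 1) =>
        (if i.val < m ∨ (j.val < m ∧ i.val = m + j.val) then 2 else 1) = 2)).trans ?_
      rw [Finset.sum_congr rfl fun i _ => hin2 i, Finset.sum_add_distrib,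
        sum_ite_val (2 * m + 1) (fun x => x < m) (2 * m),
        sum_ite_val (2 * m + 1) (fun x => x < 2 * m) 1,
        rc_lt _ _ (by omega), rc_lt _ _ (by omega)]
      ring
    have hC1 : (univ.filter fun p : Fin (2 * m + 1) × Fin (2 * m + 1) =>
        (if p.1.val < m ∨ (p.2.val < m ∧ p.1.val = m + p.2.val) then 2 else 1) = 1).card
        = 2 * m * m + 2 * m + 1 := by
      refine (prodCount (fun i j : Fin (2 * m + 1) =>
        (if i.val < m ∨ (j.val < m ∧ i.val = m + j.val) then 2 else 1) = 1)).trans ?_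
      rw [Finset.sum_congr rfl fun i _ => hin1 i, Finset.sum_add_distrib,
        sum_ite_val (2 * m + 1) (fun x => m ≤ x) (2 * m),
        sum_ite_val (2 * m + 1) (fun x => 2 * m ≤ x) 1,
        rc_ge, rc_ge]
      have e1 : 2 * m + 1 - m = m + 1 := by omega
      have e2 : 2 * m + 1 - 2 * m = 1 := by omega
      rw [e1, e2]
      ring
    rw [Finset.mem_Icc] at ha hb
    obtain ⟨ha1, ha2⟩ := ha
    obtain ⟨hb1, hb2⟩ := hb
    interval_cases a <;> interval_cases b <;> simp only [hC1, hC2] <;> omega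

end Odd

section K33andBounds

lemma mem_K33 : HasEqNsdEdge (completeBipartiteGraph (Fin 3) (Fin 3)) 3 := by
  apply hasEqNsd_of_matrix 3 ![![1,1,2],![2,2,1],![3,3,3]]
  · decide
  · decide
  · decide

lemma one_le_mem {m n k : ℕ} (hm : 0 < m) (hn : 0 < n)
    (hk : HasEqNsdEdge (completeBipartiteGraph (Fin m) (Fin n)) k) : 1 ≤ k := by
  obtain ⟨γ, hcol, -, -⟩ := hk
  have hadj : (completeBipartiteGraph (Fin m) (Fin n)).Adj (Sum.inl ⟨0, hm⟩)
      (Sum.inr ⟨0, hn⟩) := by simp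
  have := hcol _ ((SimpleGraph.mem_edgeSet _).mpr hadj)
  omega

lemma two_le_mem {n k : ℕ} (hn : 0 < n)
    (hk : HasEqNsdEdge (completeBipartiteGraph (Fin n) (Fin n)) k) : 2 ≤ k := by
  have h1 := one_le_mem hn hn hk
  rcases Nat.lt_or_ge k 2 with h | h
  · exfalso
    have hk1 : k = 1 := by omega
    subst hk1
    obtain ⟨γ, hcol, hnsd, -⟩ := hk
    have hγ : ∀ (i : Fin n) (j : Fin n), γ s(Sum.inl i, Sum.inr j) = 1 := by
      intro i j
      have hadj : (completeBipartiteGraph (Fin n) (Fin n)).Adj (Sum.inl i) (Sum.inr j) := by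
        simp
      have := hcol _ ((SimpleGraph.mem_edgeSet _).mpr hadj)
      omega
    have hadj : (completeBipartiteGraph (Fin n) (Fin n)).Adj (Sum.inl ⟨0, hn⟩)
        (Sum.inr ⟨0, hn⟩) := by simp
    apply hnsd hadj
    rw [vSum_inl, vSum_inr]
    simp [hγ]
  · exact h

set_option maxRecDepth 10000 in
lemma k33_decide : ∀ b : Fin 3 → Fin 3 → Bool,
    (∀ i j : Fin 3, (∑ j' : Fin 3, (if b i j' then 2 else 1))
        ≠ (∑ i' : Fin 3, (if b i' j then 2 else 1))) →
    ¬ (4 ≤ (univ.filter fun p : Fin 3 × Fin 3 => b p.1 p.2 = true).card ∧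
       (univ.filter fun p : Fin 3 × Fin 3 => b p.1 p.2 = true).card ≤ 5) := by decide

lemma three_le_mem {k : ℕ}
    (hk : HasEqNsdEdge (completeBipartiteGraph (Fin 3) (Fin 3)) k) : 3 ≤ k := by
  have h2 := two_le_mem (by norm_num) hk
  rcases Nat.lt_or_ge k 3 with h | h
  · exfalso
    have hk2 : k = 2 := by omega
    subst hk2
    obtain ⟨γ, hcol, hnsd, heqt⟩ := hk
    have h12 : ∀ i j : Fin 3, γ s(Sum.inl i, Sum.inr j) = 1 ∨ γ s(Sum.inl i, Sum.inr j) = 2 := by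
      intro i j
      have hadj : (completeBipartiteGraph (Fin 3) (Fin 3)).Adj (Sum.inl i) (Sum.inr j) := by
        simp
      have := hcol _ ((SimpleGraph.mem_edgeSet _).mpr hadj)
      omega
    set b : Fin 3 → Fin 3 → Bool := fun i j => γ s(Sum.inl i, Sum.inr j) == 2 with hbdef
    have hb : ∀ i j, γ s(Sum.inl i, Sum.inr j) = if b i j then 2 else 1 := by
      intro i j
      rcases h12 i j with hh | hh <;> simp [hbdef, hh]
    apply k33_decide b
    · intro i j
      have hadj : (completeBipartiteGraph (Fin 3) (Fin 3)).Adj (Sum.inl i) (Sum.inr j) := by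
        simp
      have hne := hnsd hadj
      rw [vSum_inl, vSum_inr] at hne
      have e1 : (∑ j' : Fin 3, γ s(Sum.inl i, Sum.inr j'))
          = ∑ j' : Fin 3, (if b i j' then 2 else 1) :=
        Finset.sum_congr rfl fun x _ => hb i x
      have e2 : (∑ i' : Fin 3, γ s(Sum.inl i', Sum.inr j))
          = ∑ i' : Fin 3, (if b i' j then 2 else 1) :=
        Finset.sum_congr rfl fun x _ => hb x j
      rw [e1, e2] at hne
      exact hne
    · have hf2 : (univ.filter fun p : Fin 3 × Fin 3 => γ s(Sum.inl p.1, Sum.inr p.2) = 2)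
          = (univ.filter fun p : Fin 3 × Fin 3 => b p.1 p.2 = true) := by
        apply Finset.filter_congr
        intro p _
        rcases h12 p.1 p.2 with hh | hh <;> simp [hbdef, hh]
      have hf1 : (univ.filter fun p : Fin 3 × Fin 3 => γ s(Sum.inl p.1, Sum.inr p.2) = 1)
          = (univ.filter fun p : Fin 3 × Fin 3 => ¬ (b p.1 p.2 = true)) := by
        apply Finset.filter_congr
        intro p _
        rcases h12 p.1 p.2 with hh | hh <;> simp [hbdef, hh]
      have hsum : (univ.filter fun p : Fin 3 × Fin 3 => b p.1 p.2 = true).card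
          + (univ.filter fun p : Fin 3 × Fin 3 => ¬ (b p.1 p.2 = true)).card = 9 := by
        rw [Finset.card_filter_add_card_filter_not]
        simp
      have ha := heqt 1 (by decide) 2 (by decide)
      have hb' := heqt 2 (by decide) 1 (by decide)
      rw [classCard_eq, classCard_eq, hf1, hf2] at ha hb'
      omega
  · exact h

lemma mem_lt (m n : ℕ) (hmn : m < n) :
    HasEqNsdEdge (completeBipartiteGraph (Fin m) (Fin n)) 1 := by
  apply hasEqNsd_of_matrix 1 (fun _ _ => 1)
  · intro i j; exact ⟨le_refl 1, le_refl 1⟩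
  · intro i j
    simp only [Finset.sum_const, Finset.card_univ, Fintype.card_fin, smul_eq_mul, mul_one]
    omega
  · intro a ha b hb
    rw [Finset.mem_Icc] at ha hb
    have ha' : a = 1 := by omega
    have hb' : b = 1 := by omega
    subst ha'
    subst hb'
    exact Nat.le_succ _

end K33andBounds


/-- The equitable nsd-index of the complete bipartite graph `K_{m,n}`:
it equals `2` when `m = n = 2` or `m = n ≥ 4`, it equals `3` for `K_{3,3}`,
and it equals `1` when `1 ≤ m < n`. -/
theorem equitable_nsd_index_completeBipartiteGraph :
    (∀ n : ℕ, n = 2 ∨ 4 ≤ n →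
      IsLeast {k : ℕ | HasEqNsdEdge (completeBipartiteGraph (Fin n) (Fin n)) k} 2) ∧
    IsLeast {k : ℕ | HasEqNsdEdge (completeBipartiteGraph (Fin 3) (Fin 3)) k} 3 ∧
    (∀ m n : ℕ, 1 ≤ m → m < n →
      IsLeast {k : ℕ | HasEqNsdEdge (completeBipartiteGraph (Fin m) (Fin n)) k} 1) := by
  refine ⟨?_, ⟨mem_K33, fun k hk => three_le_mem hk⟩, ?_⟩
  · intro n hn
    constructor
    · rcases Nat.even_or_odd n with ⟨t, ht⟩ | ⟨t, ht⟩
      · exact mem_even n t (by omega) (by omega)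
      · exact mem_odd n t (by omega) (by omega)
    · intro k hk
      exact two_le_mem (by omega) hk
  · intro m n hm hmn
    exact ⟨mem_lt m n hmn, fun k hk => one_le_mem hm (by omega) hk⟩
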